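/- Let X̂ and X be n×K real matrices and m = min over rows i of min(‖X̂_i‖, ‖X_i‖) > 0. Let X̂* and X* be obtained by normalizing each row to unit Euclidean length. Then ‖X̂* − X*‖_F ≤ (2/m)·‖X̂ − X‖_F. -/

import Mathlib

open Matrix

/-- Frobenius norm of a real matrix. -/
noncomputable def frobNorm {n K : ℕ} (M : Matrix (Fin n) (Fin K) ℝ) : ℝ :=
  Real.sqrt (∑ i, ∑ j, (M i j) ^ 2)

/-- Euclidean norm of a row vector. -/
noncomputable def rowNorm {K : ℕ} (x : Fin K → ℝ) : ℝ :=
  Real.sqrt (∑ j, (x j) ^ 2)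

/-- Row normalization: each row is divided by its Euclidean length. -/
noncomputable def rowNormalize {n K : ℕ} (M : Matrix (Fin n) (Fin K) ℝ) :
    Matrix (Fin n) (Fin K) ℝ :=
  fun i j => M i j / rowNorm (M i)

lemma key_vec {E : Type*} [NormedAddCommGroup E] [NormedSpace ℝ E]
    (x y : E) (m : ℝ) (hm : 0 < m) (hx : m ≤ ‖x‖) (hy : m ≤ ‖y‖) :
    ‖‖x‖⁻¹ • x - ‖y‖⁻¹ • y‖ ≤ (2 / m) * ‖x - y‖ := by
  have hx0 : (0:ℝ) < ‖x‖ := lt_of_lt_of_le hm hx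
  have hy0 : (0:ℝ) < ‖y‖ := lt_of_lt_of_le hm hy
  have heq : ‖x‖⁻¹ • x - ‖y‖⁻¹ • y = ‖x‖⁻¹ • (x - y) + (‖x‖⁻¹ - ‖y‖⁻¹) • y := by
    rw [smul_sub, sub_smul]; abel
  rw [heq]
  have h1 : ‖‖x‖⁻¹ • (x - y)‖ ≤ (1/m) * ‖x - y‖ := by
    rw [norm_smul, Real.norm_eq_abs, abs_inv, abs_of_pos hx0, one_div]
    gcongr
  have h2 : ‖(‖x‖⁻¹ - ‖y‖⁻¹) • y‖ ≤ (1/m) * ‖x - y‖ := by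
    rw [norm_smul, Real.norm_eq_abs]
    have habs : |‖x‖⁻¹ - ‖y‖⁻¹| = |‖y‖ - ‖x‖| / (‖x‖ * ‖y‖) := by
      rw [inv_sub_inv hx0.ne' hy0.ne', abs_div, abs_of_pos (mul_pos hx0 hy0)]
    rw [habs]
    have hxy : |‖y‖ - ‖x‖| ≤ ‖x - y‖ := by
      rw [abs_sub_comm]
      exact abs_norm_sub_norm_le x y
    calc |‖y‖ - ‖x‖| / (‖x‖ * ‖y‖) * ‖y‖ = |‖y‖ - ‖x‖| / ‖x‖ := by
          field_simp
      _ ≤ ‖x - y‖ / m := by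
          apply div_le_div₀ (norm_nonneg _) hxy hm hx
      _ = (1/m) * ‖x - y‖ := by ring
  calc ‖‖x‖⁻¹ • (x - y) + (‖x‖⁻¹ - ‖y‖⁻¹) • y‖
      ≤ ‖‖x‖⁻¹ • (x - y)‖ + ‖(‖x‖⁻¹ - ‖y‖⁻¹) • y‖ := norm_add_le _ _
    _ ≤ (1/m) * ‖x - y‖ + (1/m) * ‖x - y‖ := add_le_add h1 h2
    _ = (2/m) * ‖x - y‖ := by ring

lemma rowNorm_eq_norm {K : ℕ} (x : Fin K → ℝ) :
    rowNorm x = ‖(WithLp.equiv 2 (Fin K → ℝ)).symm x‖ := by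
  rw [EuclideanSpace.norm_eq]
  simp [rowNorm, Real.norm_eq_abs, sq_abs]

lemma key_row {K : ℕ} (x y : Fin K → ℝ) (m : ℝ) (hm : 0 < m)
    (hx : m ≤ rowNorm x) (hy : m ≤ rowNorm y) :
    rowNorm (fun j => x j / rowNorm x - y j / rowNorm y) ≤ (2 / m) * rowNorm (fun j => x j - y j) := by
  set X : EuclideanSpace ℝ (Fin K) := (WithLp.equiv 2 (Fin K → ℝ)).symm x
  set Y : EuclideanSpace ℝ (Fin K) := (WithLp.equiv 2 (Fin K → ℝ)).symm y
  have hxX : rowNorm x = ‖X‖ := rowNorm_eq_norm x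
  have hyY : rowNorm y = ‖Y‖ := rowNorm_eq_norm y
  have h1 : (fun j => x j / rowNorm x - y j / rowNorm y)
      = (WithLp.equiv 2 (Fin K → ℝ)) (‖X‖⁻¹ • X - ‖Y‖⁻¹ • Y) := by
    funext j
    simp only [WithLp.equiv, Equiv.refl_apply, X, Y, hxX, hyY]
    rw [div_eq_inv_mul, div_eq_inv_mul]
    rfl
  have h2 : (fun j => x j - y j) = (WithLp.equiv 2 (Fin K → ℝ)) (X - Y) := by
    funext j; rfl
  rw [h1, h2, rowNorm_eq_norm, rowNorm_eq_norm]
  simpa using key_vec X Y m hm (hxX ▸ hx) (hyY ▸ hy)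

/-- Row-normalization perturbation: if every row of `X̂` and `X` has length at
least `m > 0`, then `‖X̂* − X*‖_F ≤ (2/m) ‖X̂ − X‖_F`. -/
theorem stmt6 {n K : ℕ} (Xhat X : Matrix (Fin n) (Fin K) ℝ) (m : ℝ) (hm : 0 < m)
    (hrow : ∀ i, m ≤ min (rowNorm (Xhat i)) (rowNorm (X i))) :
    frobNorm (rowNormalize Xhat - rowNormalize X) ≤ (2 / m) * frobNorm (Xhat - X) := by
  have hc : (0:ℝ) ≤ 2 / m := by positivity
  have hrowle : ∀ i, rowNorm ((rowNormalize Xhat - rowNormalize X) i)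
      ≤ (2 / m) * rowNorm ((Xhat - X) i) := by
    intro i
    have h := key_row (Xhat i) (X i) m hm (le_trans (hrow i) (min_le_left _ _))
      (le_trans (hrow i) (min_le_right _ _))
    convert h using 2
    all_goals rfl
  have hsum : ∑ i, ∑ j, ((rowNormalize Xhat - rowNormalize X) i j) ^ 2
      ≤ (2/m)^2 * ∑ i, ∑ j, ((Xhat - X) i j) ^ 2 := by
    rw [Finset.mul_sum]
    apply Finset.sum_le_sum
    intro i _
    have h1 : ∑ j, ((rowNormalize Xhat - rowNormalize X) i j) ^ 2
        = (rowNorm ((rowNormalize Xhat - rowNormalize X) i))^2 := by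
      rw [rowNorm, Real.sq_sqrt (Finset.sum_nonneg fun j _ => sq_nonneg _)]
    have h2 : ∑ j, ((Xhat - X) i j) ^ 2 = (rowNorm ((Xhat - X) i))^2 := by
      rw [rowNorm, Real.sq_sqrt (Finset.sum_nonneg fun j _ => sq_nonneg _)]
    rw [h1, h2, ← mul_pow]
    have hn : (0:ℝ) ≤ rowNorm ((rowNormalize Xhat - rowNormalize X) i) := Real.sqrt_nonneg _
    exact pow_le_pow_left₀ hn (hrowle i) 2
  rw [frobNorm, frobNorm]
  calc Real.sqrt (∑ i, ∑ j, ((rowNormalize Xhat - rowNormalize X) i j) ^ 2)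
      ≤ Real.sqrt ((2/m)^2 * ∑ i, ∑ j, ((Xhat - X) i j) ^ 2) := Real.sqrt_le_sqrt hsum
    _ = (2/m) * Real.sqrt (∑ i, ∑ j, ((Xhat - X) i j) ^ 2) := by
        rw [Real.sqrt_mul (sq_nonneg _), Real.sqrt_sq hc]
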